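/- Let Δ be a simplicial complex whose smallest facet has d vertices, and let s ≤ r ≤ d − s. Then there exists an injection ψ from the set of s-element faces of Δ to the set of r-element faces of Δ such that A ⊆ ψ(A) for every s-element face A. In particular, f_s(Δ) ≤ f_r(Δ). -/

import Mathlib

open Finset

/-- A (finite, abstract) simplicial complex: a nonempty collection of finite
sets closed under taking subsets. -/
def IsComplex {α : Type} [DecidableEq α] (Δ : Finset (Finset α)) : Prop :=
  Δ.Nonempty ∧ ∀ A ∈ Δ, ∀ B ⊆ A, B ∈ Δ

/-- The link of a face `S` in `Δ`. -/
def link {α : Type} [DecidableEq α] (Δ : Finset (Finset α)) (S : Finset α) :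
    Finset (Finset α) :=
  Δ.filter fun F => Disjoint F S ∧ F ∪ S ∈ Δ

/-- The deletion of a vertex `v` from `Δ`. -/
def del {α : Type} [DecidableEq α] (Δ : Finset (Finset α)) (v : α) :
    Finset (Finset α) :=
  Δ.filter fun F => v ∉ F

/-- A facet: a maximal face. -/
def IsFacet {α : Type} (Δ : Finset (Finset α)) (A : Finset α) : Prop :=
  A ∈ Δ ∧ ∀ B ∈ Δ, A ⊆ B → B = A

/-- Vertex-decomposability: `Δ` is a simplex, or has a shedding vertex `v`
(every face containing `v` admits an exchange) whose deletion and link are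
both vertex-decomposable. -/
inductive VertexDecomposable {α : Type} [DecidableEq α] :
    Finset (Finset α) → Prop
  | simplex (A : Finset α) : VertexDecomposable A.powerset
  | shed (Δ : Finset (Finset α)) (v : α)
      (hshed : ∀ A ∈ Δ, v ∈ A → ∃ w, w ≠ v ∧ w ∉ A ∧ insert w (A.erase v) ∈ Δ)
      (hdel : VertexDecomposable (del Δ v))
      (hlink : VertexDecomposable (link Δ {v})) :
      VertexDecomposable Δ


lemma exists_facet_superset {α : Type} [DecidableEq α] {Δ : Finset (Finset α)}
    {A : Finset α} (hA : A ∈ Δ) :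
    ∃ F, IsFacet Δ F ∧ A ⊆ F := by
  obtain ⟨F, hF, hmax⟩ :=
    (Δ.filter fun B => A ⊆ B).exists_max_image Finset.card ⟨A, by simp [hA]⟩
  simp only [mem_filter] at hF
  refine ⟨F, ⟨hF.1, fun B hB hFB => ?_⟩, hF.2⟩
  exact (Finset.eq_of_subset_of_card_le hFB
    (hmax B (by simp [hB, hF.2.trans hFB]))).symm

-- lower bound: each s-face is in ≥ (d-s).choose (r-s) many r-faces
lemma lower_count {α : Type} [DecidableEq α] {Δ : Finset (Finset α)}
    (hΔ : IsComplex Δ) {d s r : ℕ}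
    (hfacet : ∀ A, IsFacet Δ A → d ≤ A.card)
    (hsr : s ≤ r) (hrd : r ≤ d - s)
    {A : Finset α} (hA : A ∈ Δ) (hAs : A.card = s) :
    (d - s).choose (r - s) ≤ (Δ.filter fun B => A ⊆ B ∧ B.card = r).card := by
  obtain ⟨F, hF, hAF⟩ := exists_facet_superset hA
  have hdF : d ≤ F.card := hfacet F hF
  have himg : ((F \ A).powersetCard (r - s)).image (fun T => A ∪ T) ⊆
      Δ.filter fun B => A ⊆ B ∧ B.card = r := by
    intro B hB
    simp only [mem_image, mem_powersetCard] at hB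
    obtain ⟨T, ⟨hTF, hTc⟩, rfl⟩ := hB
    have hTF' : T ⊆ F := hTF.trans (sdiff_subset)
    have hdisj : Disjoint A T := by
      exact disjoint_of_subset_right hTF (disjoint_sdiff)
    refine mem_filter.2 ⟨hΔ.2 F hF.1 _ (union_subset hAF hTF'), subset_union_left, ?_⟩
    rw [card_union_of_disjoint hdisj, hAs, hTc]
    omega
  have hinj : Set.InjOn (fun T => A ∪ T) ((F \ A).powersetCard (r - s)) := by
    intro T hT T' hT' h
    simp only [mem_coe, mem_powersetCard] at hT hT'
    have d1 : Disjoint A T := disjoint_of_subset_right hT.1 disjoint_sdiff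
    have d2 : Disjoint A T' := disjoint_of_subset_right hT'.1 disjoint_sdiff
    have : (A ∪ T) \ A = (A ∪ T') \ A := by simpa using congrArg (· \ A) h
    rwa [union_sdiff_left, union_sdiff_left, sdiff_eq_self_of_disjoint d1.symm,
      sdiff_eq_self_of_disjoint d2.symm] at this
  calc (d - s).choose (r - s) ≤ (F.card - s).choose (r - s) :=
        Nat.choose_le_choose _ (by omega)
    _ = ((F \ A).powersetCard (r - s)).card := by
        rw [card_powersetCard, card_sdiff_of_subset hAF, hAs]
    _ = (((F \ A).powersetCard (r - s)).image (fun T => A ∪ T)).card :=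
        (card_image_of_injOn hinj).symm
    _ ≤ _ := card_le_card himg

/-- **Hibi's lemma.** Let `Δ` be a simplicial complex whose smallest facet has
`d` vertices, and let `s ≤ r ≤ d - s`. Then there is an injection `ψ` from the
`s`-element faces of `Δ` to the `r`-element faces of `Δ` with `A ⊆ ψ(A)` for
every `s`-element face `A`; in particular `f_s(Δ) ≤ f_r(Δ)`. -/
theorem hibi_injection {α : Type} [DecidableEq α] (Δ : Finset (Finset α))
    (hΔ : IsComplex Δ) (d : ℕ)
    (hmin : ∃ A, IsFacet Δ A ∧ A.card = d)
    (hfacet : ∀ A, IsFacet Δ A → d ≤ A.card)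
    (s r : ℕ) (hsr : s ≤ r) (hrd : r ≤ d - s) :
    (∃ ψ : Finset α → Finset α,
      Set.InjOn ψ {A | A ∈ Δ ∧ A.card = s} ∧
      ∀ A ∈ Δ, A.card = s → ψ A ∈ Δ ∧ (ψ A).card = r ∧ A ⊆ ψ A) ∧
    (Δ.filter fun A => A.card = s).card ≤ (Δ.filter fun A => A.card = r).card := by

  classical
  have hcs : 0 < r.choose s := Nat.choose_pos hsr
  have hcC : r.choose s ≤ (d - s).choose (r - s) := by
    rw [← Nat.choose_symm hsr]
    exact Nat.choose_le_choose _ hrd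
  have hC : 0 < (d - s).choose (r - s) := lt_of_lt_of_le hcs hcC
  set Fs := Δ.filter fun A => A.card = s with hFsdef
  set t : {x // x ∈ Fs} → Finset (Finset α) :=
    (fun a => Δ.filter fun B => ↑a ⊆ B ∧ B.card = r) with htdef
  have hmem : ∀ a : {x // x ∈ Fs}, (a : Finset α) ∈ Δ ∧ (a : Finset α).card = s := by
    intro a
    exact mem_filter.1 a.2
  have hall : ∀ J : Finset {x // x ∈ Fs}, J.card ≤ (J.biUnion t).card := by
    intro J
    set N := J.biUnion t with hN
    have hNr : ∀ B ∈ N, B ∈ Δ ∧ B.card = r := by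
      intro B hB
      obtain ⟨a, ha, hB⟩ := mem_biUnion.1 hB
      have hB' := mem_filter.1 hB
      exact ⟨hB'.1, hB'.2.2⟩
    have key : J.card * (d - s).choose (r - s) ≤ N.card * (d - s).choose (r - s) := by
      calc J.card * (d - s).choose (r - s)
          ≤ ∑ a ∈ J, (N.filter fun B => ↑a ⊆ B).card := by
            rw [← smul_eq_mul]
            refine Finset.card_nsmul_le_sum J _ _ (fun a ha => ?_)
            refine le_trans (lower_count hΔ hfacet hsr hrd (hmem a).1 (hmem a).2) ?_
            refine card_le_card (fun B hB => ?_)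
            rw [mem_filter] at hB ⊢
            refine ⟨?_, hB.2.1⟩
            exact mem_biUnion.2 ⟨a, ha, mem_filter.2 hB⟩
        _ = ∑ B ∈ N, (J.filter fun a => ↑a ⊆ B).card := by
            simp only [card_filter]
            exact Finset.sum_comm
        _ ≤ N.card * (r.choose s) := by
            rw [← smul_eq_mul]
            refine Finset.sum_le_card_nsmul N _ _ (fun B hB => ?_)
            have hBr := hNr B hB
            calc (J.filter fun a => ↑a ⊆ B).card ≤ (B.powersetCard s).card := by
                  refine card_le_card_of_injOn Subtype.val (fun a ha => ?_)
                    (Set.injOn_of_injective Subtype.val_injective)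
                  rw [mem_coe, mem_filter] at ha
                  exact mem_powersetCard.2 ⟨ha.2, (hmem a).2⟩
              _ = r.choose s := by rw [card_powersetCard, hBr.2]
        _ ≤ N.card * (d - s).choose (r - s) := Nat.mul_le_mul_left _ hcC
    exact Nat.le_of_mul_le_mul_right key hC
  obtain ⟨f, hfinj, hft⟩ := (Finset.all_card_le_biUnion_card_iff_exists_injective t).1 hall
  have hftm : ∀ a, f a ∈ Δ ∧ (a : Finset α) ⊆ f a ∧ (f a).card = r := by
    intro a
    have this := mem_filter.1 (hft a)
    exact ⟨this.1, this.2.1, this.2.2⟩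
  set ψ : Finset α → Finset α := fun A => if h : A ∈ Fs then f ⟨A, h⟩ else ∅ with hψ
  have hset : ∀ A, (A ∈ Δ ∧ A.card = s) → A ∈ Fs := fun A h => mem_filter.2 h
  have hval : ∀ A (h : A ∈ Fs), ψ A = f ⟨A, h⟩ := fun A h => dif_pos h
  have hmaps : ∀ A ∈ Δ, A.card = s → ψ A ∈ Δ ∧ (ψ A).card = r ∧ A ⊆ ψ A := by
    intro A hA hAs
    rw [hval A (hset A ⟨hA, hAs⟩)]
    obtain ⟨h1, h2, h3⟩ := hftm ⟨A, hset A ⟨hA, hAs⟩⟩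
    exact ⟨h1, h3, h2⟩
  have hinjOn : Set.InjOn ψ {A | A ∈ Δ ∧ A.card = s} := by
    intro A hA A' hA' h
    rw [hval A (hset A hA), hval A' (hset A' hA')] at h
    exact congrArg Subtype.val (hfinj h)
  refine ⟨⟨ψ, hinjOn, hmaps⟩, ?_⟩
  refine card_le_card_of_injOn ψ (fun A hA => ?_) ?_
  · rw [mem_coe, hFsdef, mem_filter] at hA
    obtain ⟨h1, h2, _⟩ := hmaps A hA.1 hA.2
    exact mem_filter.2 ⟨h1, h2⟩
  · intro A hA A' hA' h
    rw [mem_coe, mem_filter] at hA hA'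
    exact hinjOn hA hA' h
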